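/- Let G be a median graph with weight function w. Then the median set Med_w(G) = argmin_x F_w(x) equals the intersection of all majoritary halfspaces of G, i.e., halfspaces H with w(H) > w(V)/2 (majority rule). -/

import Mathlib

open Finset

def interval {V : Type*} (G : SimpleGraph V) (u v : V) : Set V :=
  {x | G.dist u x + G.dist x v = G.dist u v}

def IsMedianGraph {V : Type*} (G : SimpleGraph V) : Prop :=
  G.Connected ∧ ∀ x y z : V,
    ∃! m : V, m ∈ interval G x y ∧ m ∈ interval G y z ∧ m ∈ interval G z x

def Wset {V : Type*} (G : SimpleGraph V) (u v : V) : Set V :=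
  {x | G.dist u x < G.dist v x}

namespace MajorityRule

variable {V : Type*} {G : SimpleGraph V}

lemma mg_step (hG : IsMedianGraph G) {a b : V} (hab : G.Adj a b) (c : V) :
    G.dist c a = G.dist c b + 1 ∨ G.dist c b = G.dist c a + 1 := by
  obtain ⟨hc, hmed⟩ := hG
  obtain ⟨m, ⟨h1, h2, h3⟩, -⟩ := hmed a b c
  simp only [interval, Set.mem_setOf_eq] at h1 h2 h3
  have hab1 : G.dist a b = 1 := SimpleGraph.dist_eq_one_iff_adj.mpr hab
  rw [hab1] at h1
  have h0 : G.dist a m = 0 ∨ G.dist m b = 0 := by omega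
  have dc : ∀ x y : V, G.dist x y = G.dist y x := fun x y => SimpleGraph.dist_comm
  rcases h0 with h | h
  · have hma : a = m := hc.dist_eq_zero_iff.mp h
    rw [← hma] at h2
    right
    have e1 : G.dist b a = 1 := by rw [dc b a, hab1]
    have e2 : G.dist c b = G.dist b c := dc c b
    have e3 : G.dist c a = G.dist a c := dc c a
    omega
  · have hmb : m = b := hc.dist_eq_zero_iff.mp h
    rw [hmb] at h3
    left
    have e1 : G.dist b a = 1 := by rw [dc b a, hab1]
    omega

def IsChain (G : SimpleGraph V) (p : ℕ → V) (n : ℕ) : Prop :=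
  (∀ i < n, G.Adj (p i) (p (i + 1))) ∧ G.dist (p 0) (p n) = n

lemma chain_dist_le (hc : G.Connected) {p : ℕ → V} {n : ℕ}
    (hadj : ∀ i < n, G.Adj (p i) (p (i + 1))) :
    ∀ k i, i + k ≤ n → G.dist (p i) (p (i + k)) ≤ k := by
  intro k
  induction k with
  | zero => intro i _; simp [SimpleGraph.dist_self]
  | succ k ih =>
    intro i hik
    have h1 : G.dist (p i) (p (i + k)) ≤ k := ih i (by omega)
    have h2 : G.dist (p (i + k)) (p (i + k + 1)) = 1 :=
      SimpleGraph.dist_eq_one_iff_adj.mpr (hadj (i + k) (by omega))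
    have := hc.dist_triangle (u := p i) (v := p (i + k)) (w := p (i + k + 1))
    have heq : i + (k + 1) = i + k + 1 := by omega
    rw [heq]
    omega

lemma chain_dist (hc : G.Connected) {p : ℕ → V} {n : ℕ}
    (hch : IsChain G p n) {i j : ℕ} (hij : i ≤ j) (hjn : j ≤ n) :
    G.dist (p i) (p j) = j - i := by
  obtain ⟨hadj, hgeo⟩ := hch
  have h1 : G.dist (p 0) (p i) ≤ i := by
    have := chain_dist_le hc hadj i 0 (by omega); simpa using this
  have h2 : G.dist (p i) (p j) ≤ j - i := by
    have := chain_dist_le hc hadj (j - i) i (by omega)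
    have heq : i + (j - i) = j := by omega
    rwa [heq] at this
  have h3 : G.dist (p j) (p n) ≤ n - j := by
    have := chain_dist_le hc hadj (n - j) j (by omega)
    have heq : j + (n - j) = n := by omega
    rwa [heq] at this
  have t1 := hc.dist_triangle (u := p 0) (v := p i) (w := p n)
  have t2 := hc.dist_triangle (u := p i) (v := p j) (w := p n)
  omega


lemma gb (hG : IsMedianGraph G) {u v : V} (huv : G.Adj u v) (c : V) :
    G.dist v c + 1 = G.dist u c ∨ G.dist u c + 1 = G.dist v c := by
  have h := mg_step hG huv c
  have e1 : G.dist c u = G.dist u c := SimpleGraph.dist_comm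
  have e2 : G.dist c v = G.dist v c := SimpleGraph.dist_comm
  omega

lemma no_bad_chain (hG : IsMedianGraph G) {u v : V} (huv : G.Adj u v) :
    ∀ T n (p : ℕ → V), IsChain G p n → 2 ≤ n →
      G.dist u (p 0) + 1 = G.dist v (p 0) →
      G.dist u (p n) + 1 = G.dist v (p n) →
      (∀ i, 0 < i → i < n → G.dist v (p i) + 1 = G.dist u (p i)) →
      (∑ i ∈ range (n + 1), G.dist u (p i)) < T → False := by
  classical
  have hconn := hG.1
  have dc : ∀ x y : V, G.dist x y = G.dist y x := fun x y => SimpleGraph.dist_comm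
  intro T
  induction T with
  | zero => intro n p _ _ _ _ _ h; omega
  | succ T IH =>
    intro n p hch h2n h0 hn hbad hT
    -- first step goes up
    have hu1 : G.dist u (p 1) = G.dist u (p 0) + 1 := by
      have e : G.Adj (p 0) (p 1) := by
        have h := hch.1 0 (by omega)
        simpa using h
      have du := mg_step hG e u
      have dv := mg_step hG e v
      have b1 := hbad 1 (by omega) (by omega)
      omega
    -- last step goes down
    have hnn : n - 1 + 1 = n := by omega
    have hun1 : G.dist u (p (n - 1)) = G.dist u (p n) + 1 := by
      have e := hch.1 (n - 1) (by omega)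
      rw [hnn] at e
      have du := mg_step hG e u
      have dv := mg_step hG e v
      have bn := hbad (n - 1) (by omega) (by omega)
      omega
    -- pivot
    have hQex : ∃ i, G.dist u (p (i + 1)) + 1 = G.dist u (p i) := ⟨n - 1, by rw [hnn]; omega⟩
    set j := Nat.find hQex with hjdef
    have hQj : G.dist u (p (j + 1)) + 1 = G.dist u (p j) := Nat.find_spec hQex
    have hjle : j ≤ n - 1 := Nat.find_min' hQex (by rw [hnn]; omega)
    have hj0 : 0 < j := by
      rcases Nat.eq_zero_or_pos j with h | h
      · exfalso; rw [h] at hQj; simp only [Nat.zero_add] at hQj; omega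
      · exact h
    have hjj : j - 1 + 1 = j := by omega
    have hup : G.dist u (p j) = G.dist u (p (j - 1)) + 1 := by
      have hnQ : ¬ (G.dist u (p (j - 1 + 1)) + 1 = G.dist u (p (j - 1))) :=
        Nat.find_min hQex (by omega)
      rw [hjj] at hnQ
      have e := hch.1 (j - 1) (by omega)
      rw [hjj] at e
      have du := mg_step hG e u
      omega
    -- the median of (p (j-1), p (j+1), u)
    have hd2 : G.dist (p (j - 1)) (p (j + 1)) = 2 := by
      have h := chain_dist hconn hch (i := j - 1) (j := j + 1) (by omega) (by omega)
      rw [h]; omega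
    obtain ⟨m, ⟨h1, h2, h3⟩, -⟩ := hG.2 (p (j - 1)) (p (j + 1)) u
    simp only [interval, Set.mem_setOf_eq] at h1 h2 h3
    rw [hd2] at h1
    have c1 : G.dist (p (j + 1)) m = G.dist m (p (j + 1)) := dc _ _
    have c2 : G.dist (p (j + 1)) u = G.dist u (p (j + 1)) := dc _ _
    have c3 : G.dist m (p (j - 1)) = G.dist (p (j - 1)) m := dc _ _
    have c4 : G.dist m u = G.dist u m := dc _ _
    have hma : G.dist (p (j - 1)) m = 1 := by omega
    have hmb : G.dist m (p (j + 1)) = 1 := by omega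
    have hmu : G.dist u m + 2 = G.dist u (p j) := by omega
    -- updated chain
    set q : ℕ → V := Function.update p j m with hqdef
    have hqj : q j = m := Function.update_self j m p
    have hqne : ∀ i, i ≠ j → q i = p i := fun i hi => Function.update_of_ne hi m p
    have hqadj : ∀ i < n, G.Adj (q i) (q (i + 1)) := by
      intro i hi
      rcases eq_or_ne i j with hij | hij
      · rw [hij, hqj, hqne (j + 1) (by omega)]
        exact SimpleGraph.dist_eq_one_iff_adj.mp hmb
      · rcases eq_or_ne (i + 1) j with he | hne
        · rw [hqne i hij, he, hqj]
          have hieq : i = j - 1 := by omega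
          rw [hieq]
          exact SimpleGraph.dist_eq_one_iff_adj.mp hma
        · rw [hqne i hij, hqne (i + 1) hne]; exact hch.1 i hi
    have hsum : (∑ i ∈ range (n + 1), G.dist u (q i)) + 2
        = ∑ i ∈ range (n + 1), G.dist u (p i) := by
      have hjmem : j ∈ range (n + 1) := by simp only [Finset.mem_range]; omega
      rw [← Finset.add_sum_erase _ (fun i => G.dist u (p i)) hjmem,
          ← Finset.add_sum_erase _ (fun i => G.dist u (q i)) hjmem]
      have he : ∑ i ∈ (range (n + 1)).erase j, G.dist u (q i)
          = ∑ i ∈ (range (n + 1)).erase j, G.dist u (p i) :=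
        Finset.sum_congr rfl (fun i hi => by rw [hqne i (Finset.ne_of_mem_erase hi)])
      rw [he, hqj]
      omega
    rcases gb hG huv m with hbadm | hgoodm
    · -- m is bad : swap, potential decreases
      have hchq : IsChain G q n :=
        ⟨hqadj, by rw [hqne 0 (by omega), hqne n (by omega)]; exact hch.2⟩
      refine IH n q hchq h2n (by rw [hqne 0 (by omega)]; exact h0)
        (by rw [hqne n (by omega)]; exact hn) ?_ (by omega)
      intro i hi1 hi2
      rcases eq_or_ne i j with hij | hij
      · rw [hij, hqj]; exact hbadm
      · rw [hqne i hij]; exact hbad i hi1 hi2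
    · -- m is good
      rcases eq_or_ne n 2 with rfl | hn3
      · -- base case n = 2 : contradiction with uniqueness of the median of (p 0, p 2, v)
        have hj1 : j = 1 := by omega
        rw [hj1] at hQj hmu hup hma hmb hd2
        simp only [show (1:ℕ) - 1 = 0 from rfl, show (1:ℕ) + 1 = 2 from rfl]
          at hQj hmu hup hma hmb hd2
        have b1 := hbad 1 (by omega) (by omega)
        have d01 : G.dist (p 0) (p 1) = 1 := by
          have := chain_dist hconn hch (i := 0) (j := 1) (by omega) (by omega); simpa using this
        have d12 : G.dist (p 1) (p 2) = 1 := by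
          have := chain_dist hconn hch (i := 1) (j := 2) (by omega) (by omega); simpa using this
        obtain ⟨M, -, hMuniq⟩ := hG.2 (p 0) (p 2) v
        have e1 : G.dist (p 2) (p 1) = G.dist (p 1) (p 2) := dc _ _
        have e2 : G.dist (p 1) v = G.dist v (p 1) := dc _ _
        have e3 : G.dist (p 2) v = G.dist v (p 2) := dc _ _
        have e4 : G.dist (p 1) (p 0) = G.dist (p 0) (p 1) := dc _ _
        have e5 : G.dist (p 2) m = G.dist m (p 2) := dc _ _
        have e6 : G.dist m v = G.dist v m := dc _ _
        have e7 : G.dist m (p 0) = G.dist (p 0) m := dc _ _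
        have e8 : G.dist v u = 1 := SimpleGraph.dist_eq_one_iff_adj.mpr huv.symm
        have hvm : G.dist v m = G.dist u m + 1 := hgoodm.symm
        have hvm2 : G.dist v m ≤ 1 + G.dist u m := by
          have := hconn.dist_triangle (u := v) (v := u) (w := m); omega
        have hP1 : p 1 = M := by
          refine hMuniq (p 1) ⟨?_, ?_, ?_⟩ <;>
            simp only [interval, Set.mem_setOf_eq] <;> omega
        have hPm : m = M := by
          refine hMuniq m ⟨?_, ?_, ?_⟩ <;>
            simp only [interval, Set.mem_setOf_eq] <;> omega
        have : G.dist u (p 1) = G.dist u m := by rw [hP1.trans hPm.symm]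
        omega
      · -- n ≥ 3 : split the chain at m
        rcases le_or_gt 2 j with hj2 | hjlt
        · -- left chain of length j
          have hd0m : G.dist (p 0) m = j := by
            have d1 : G.dist (p 0) (p (j - 1)) = j - 1 :=
              chain_dist hconn hch (by omega) (by omega)
            have d2 : G.dist (p 0) (p (j + 1)) = j + 1 :=
              chain_dist hconn hch (by omega) (by omega)
            have t1 := hconn.dist_triangle (u := p 0) (v := p (j - 1)) (w := m)
            have t2 := hconn.dist_triangle (u := p 0) (v := m) (w := p (j + 1))
            omega
          have hchq : IsChain G q j := by
            refine ⟨fun i hi => hqadj i (by omega), ?_⟩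
            rw [hqne 0 (by omega), hqj]; exact hd0m
          have hsub : (∑ i ∈ range (j + 1), G.dist u (q i)) + 2
              ≤ ∑ i ∈ range (n + 1), G.dist u (p i) := by
            have hsplit : ∑ i ∈ range (j + 1), G.dist u (q i)
                = (∑ i ∈ range j, G.dist u (p i)) + G.dist u m := by
              rw [Finset.sum_range_succ, hqj]
              congr 1
              refine Finset.sum_congr rfl (fun i hi => ?_)
              rw [hqne i (by simp only [Finset.mem_range] at hi; omega)]
            have hmono : (∑ i ∈ range (j + 1), G.dist u (p i))
                ≤ ∑ i ∈ range (n + 1), G.dist u (p i) :=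
              Finset.sum_le_sum_of_subset (by
                intro i hi; simp only [Finset.mem_range] at *; omega)
            rw [Finset.sum_range_succ] at hmono
            omega
          refine IH j q hchq hj2 (by rw [hqne 0 (by omega)]; exact h0)
            (by rw [hqj]; exact hgoodm) ?_ (by omega)
          intro i hi1 hi2
          rw [hqne i (by omega)]
          exact hbad i hi1 (by omega)
        · -- j = 1 : right chain of length n - 1
          have hj1 : j = 1 := by omega
          have hdmn : G.dist m (p n) = n - 1 := by
            have d1 : G.dist (p (j + 1)) (p n) = n - (j + 1) :=
              chain_dist hconn hch (by omega) (by omega)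
            have t1 := hconn.dist_triangle (u := m) (v := p (j + 1)) (w := p n)
            have t2 := hconn.dist_triangle (u := p 0) (v := m) (w := p n)
            have t3 := hconn.dist_triangle (u := p 0) (v := p (j - 1)) (w := m)
            have d2 : G.dist (p 0) (p (j - 1)) = j - 1 :=
              chain_dist hconn hch (by omega) (by omega)
            have := hch.2
            omega
          have hq1m : q 1 = m := by rw [← hj1]; exact hqj
          have hchs : IsChain G (fun i => q (i + 1)) (n - 1) := by
            refine ⟨fun i hi => hqadj (i + 1) (by omega), ?_⟩
            show G.dist (q 1) (q (n - 1 + 1)) = n - 1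
            rw [hnn, hqne n (by omega), hq1m]
            exact hdmn
          have hssum : (∑ i ∈ range (n - 1 + 1), G.dist u (q (i + 1)))
              < ∑ i ∈ range (n + 1), G.dist u (p i) := by
            rw [hnn]
            have hsucc : (∑ i ∈ range (n + 1), G.dist u (q i))
                = (∑ i ∈ range n, G.dist u (q (i + 1))) + G.dist u (q 0) :=
              Finset.sum_range_succ' (fun i => G.dist u (q i)) n
            omega
          refine IH (n - 1) (fun i => q (i + 1)) hchs (by omega)
            (by show G.dist u (q 1) + 1 = G.dist v (q 1); rw [hq1m]; exact hgoodm)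
            (by show G.dist u (q (n - 1 + 1)) + 1 = G.dist v (q (n - 1 + 1))
                rw [hnn, hqne n (by omega)]; exact hn) ?_
            (by show (∑ i ∈ range (n - 1 + 1), G.dist u (q (i + 1))) < T; omega)
          intro i hi1 hi2
          show G.dist v (q (i + 1)) + 1 = G.dist u (q (i + 1))
          rw [hqne (i + 1) (by omega)]
          exact hbad (i + 1) (by omega) (by omega)

lemma conv (hG : IsMedianGraph G) {u v : V} (huv : G.Adj u v) {x z t : V}
    (hx : G.dist u x + 1 = G.dist v x) (hz : G.dist u z + 1 = G.dist v z)
    (ht : G.dist x t + G.dist t z = G.dist x z) :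
    G.dist u t + 1 = G.dist v t := by
  classical
  have hconn := hG.1
  rcases gb hG huv t with hbadt | hgood
  swap
  · exact hgood
  exfalso
  obtain ⟨w1, hw1⟩ := hconn.exists_walk_length_eq_dist x t
  obtain ⟨w2, hw2⟩ := hconn.exists_walk_length_eq_dist t z
  set n := G.dist x z with hn
  set k := G.dist x t with hk
  set p : ℕ → V := fun i => (w1.append w2).getVert i with hp
  have hlen : (w1.append w2).length = n := by
    rw [SimpleGraph.Walk.length_append, hw1, hw2]; exact ht
  have hp0 : p 0 = x := SimpleGraph.Walk.getVert_zero _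
  have hpn : p n = z := by
    show (w1.append w2).getVert n = z
    rw [← hlen]; exact SimpleGraph.Walk.getVert_length _
  have hch : IsChain G p n := by
    refine ⟨fun i hi => (w1.append w2).adj_getVert_succ (by omega), ?_⟩
    rw [hp0, hpn]
  have hpk : p k = t := by
    show (w1.append w2).getVert k = t
    rw [SimpleGraph.Walk.getVert_append, if_neg (by omega), hw1]
    simp [SimpleGraph.Walk.getVert_zero]
  have hk0 : 0 < k := by
    rcases Nat.eq_zero_or_pos k with h | h
    · exfalso
      have : x = t := hconn.dist_eq_zero_iff.mp h
      rw [this] at hx; omega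
    · exact h
  have hkn : k < n := by
    rcases Nat.eq_zero_or_pos (G.dist t z) with h | h
    · exfalso
      have : t = z := hconn.dist_eq_zero_iff.mp h
      rw [← this] at hz; omega
    · omega
  -- last good vertex before k
  set P : ℕ → Prop := fun i => G.dist u (p i) + 1 = G.dist v (p i) with hP
  have hP0 : P 0 := by rw [hP]; simp only; rw [hp0]; exact hx
  set i₀ := Nat.findGreatest P (k - 1) with hi₀
  have hi₀P : P i₀ := Nat.findGreatest_spec (m := 0) (by omega) hP0
  have hi₀le : i₀ ≤ k - 1 := Nat.findGreatest_le _
  -- first good vertex after k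
  have hex : ∃ l, P (k + 1 + l) := by
    refine ⟨n - (k + 1), ?_⟩
    have e : k + 1 + (n - (k + 1)) = n := by omega
    rw [hP]; simp only; rw [e, hpn]; exact hz
  set l₀ := Nat.find hex with hl₀
  have hjgood : P (k + 1 + l₀) := Nat.find_spec hex
  have hl₀le : l₀ ≤ n - (k + 1) := by
    refine Nat.find_min' hex ?_
    have e : k + 1 + (n - (k + 1)) = n := by omega
    rw [hP]; simp only; rw [e, hpn]; exact hz
  set j := k + 1 + l₀ with hj
  set L := j - i₀ with hL
  have hL2 : 2 ≤ L := by omega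
  have hjn : j ≤ n := by omega
  set r : ℕ → V := fun i => p (i₀ + i) with hr
  have hchr : IsChain G r L := by
    constructor
    · intro i hi
      show G.Adj (p (i₀ + i)) (p (i₀ + (i + 1)))
      have e : i₀ + (i + 1) = (i₀ + i) + 1 := by omega
      rw [e]
      exact hch.1 (i₀ + i) (by omega)
    · show G.dist (p (i₀ + 0)) (p (i₀ + L)) = L
      have e0 : i₀ + 0 = i₀ := by omega
      have eL : i₀ + L = j := by omega
      rw [e0, eL]
      rw [chain_dist hconn hch (by omega) hjn]
  have hr0 : G.dist u (r 0) + 1 = G.dist v (r 0) := by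
    show G.dist u (p (i₀ + 0)) + 1 = G.dist v (p (i₀ + 0))
    have e0 : i₀ + 0 = i₀ := by omega
    rw [e0]; exact hi₀P
  have hrL : G.dist u (r L) + 1 = G.dist v (r L) := by
    show G.dist u (p (i₀ + L)) + 1 = G.dist v (p (i₀ + L))
    have eL : i₀ + L = j := by omega
    rw [eL]; exact hjgood
  have hrbad : ∀ i, 0 < i → i < L → G.dist v (r i) + 1 = G.dist u (r i) := by
    intro i h1 h2
    show G.dist v (p (i₀ + i)) + 1 = G.dist u (p (i₀ + i))
    set κ := i₀ + i with hκ
    have hκj : κ < j := by omega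
    have hκi : i₀ < κ := by omega
    rcases lt_trichotomy κ k with hlt | heq | hgt
    · have hnP : ¬ P κ := Nat.findGreatest_is_greatest hκi (by omega)
      rcases gb hG huv (p κ) with h | h
      · exact h
      · exact absurd h hnP
    · rw [heq, hpk]; exact hbadt
    · have hll : κ - (k + 1) < l₀ := by omega
      have hnP : ¬ P (k + 1 + (κ - (k + 1))) := Nat.find_min hex hll
      have e : k + 1 + (κ - (k + 1)) = κ := by omega
      rw [e] at hnP
      rcases gb hG huv (p κ) with h | h
      · exact h
      · exact absurd h hnP
  exact no_bad_chain hG huv ((∑ i ∈ range (L + 1), G.dist u (r i)) + 1) L r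
    hchr hL2 hr0 hrL hrbad (Nat.lt_succ_self _)

lemma gate (hG : IsMedianGraph G) [Fintype V] {u v : V} (huv : G.Adj u v) (x : V) :
    ∃ g, (G.dist u g + 1 = G.dist v g) ∧
      ∀ s, G.dist u s + 1 = G.dist v s → G.dist x g + G.dist g s = G.dist x s := by
  classical
  have hconn := hG.1
  have dc : ∀ a b : V, G.dist a b = G.dist b a := fun a b => SimpleGraph.dist_comm
  have hugood : G.dist u u + 1 = G.dist v u := by
    have h1 : G.dist u u = 0 := SimpleGraph.dist_self
    have h2 : G.dist v u = 1 := SimpleGraph.dist_eq_one_iff_adj.mpr huv.symm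
    omega
  obtain ⟨g, hgmem, hgmin⟩ := Finset.exists_min_image
    (univ.filter fun c => G.dist u c + 1 = G.dist v c) (fun c => G.dist x c)
    ⟨u, by simp only [Finset.mem_filter, Finset.mem_univ, true_and]; exact hugood⟩
  simp only [Finset.mem_filter, Finset.mem_univ, true_and] at hgmem
  refine ⟨g, hgmem, fun s hs => ?_⟩
  obtain ⟨m, ⟨h1, h2, h3⟩, -⟩ := hG.2 x g s
  simp only [interval, Set.mem_setOf_eq] at h1 h2 h3
  have hmgood : G.dist u m + 1 = G.dist v m := conv hG huv hgmem hs h2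
  have hmin : G.dist x g ≤ G.dist x m := hgmin m (by simp [hmgood])
  have hmg : G.dist m g = 0 := by omega
  obtain rfl : m = g := hconn.dist_eq_zero_iff.mp hmg
  have c1 : G.dist s m = G.dist m s := dc _ _
  have c2 : G.dist m x = G.dist x m := dc _ _
  have c4 : G.dist x s = G.dist s x := dc _ _
  omega

lemma mg_step2 (hG : IsMedianGraph G) {a b : V} (hab : G.Adj a b) (c : V) :
    G.dist a c = G.dist b c + 1 ∨ G.dist b c = G.dist a c + 1 := by
  have h := mg_step hG hab c
  have e1 : G.dist c a = G.dist a c := SimpleGraph.dist_comm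
  have e2 : G.dist c b = G.dist b c := SimpleGraph.dist_comm
  omega

lemma good_iff (hG : IsMedianGraph G) {u v : V} (huv : G.Adj u v) (c : V) :
    G.dist u c < G.dist v c ↔ G.dist u c + 1 = G.dist v c := by
  rcases gb hG huv c with h | h <;> constructor <;> intro h' <;> omega

lemma Fdiff [Fintype V] (w : V → ℝ) (hG : IsMedianGraph G) {a b : V} (hab : G.Adj a b) :
    (∑ c : V, w c * (G.dist a c : ℝ)) - ∑ c : V, w c * (G.dist b c : ℝ)
      = (∑ c ∈ univ.filter (fun c => G.dist b c < G.dist a c), w c)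
        - ∑ c ∈ univ.filter (fun c => G.dist a c < G.dist b c), w c := by
  classical
  rw [← Finset.sum_sub_distrib]
  have key : ∀ c : V, w c * (G.dist a c : ℝ) - w c * (G.dist b c : ℝ)
      = (if G.dist a c < G.dist b c then -(w c) else w c) := by
    intro c
    rcases mg_step2 hG hab c with h | h
    · rw [if_neg (by omega), h]; push_cast; ring
    · rw [if_pos (by omega), h]; push_cast; ring
  rw [Finset.sum_congr rfl fun c _ => key c, Finset.sum_ite, Finset.sum_neg_distrib]
  have hflt : univ.filter (fun c => ¬ (G.dist a c < G.dist b c))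
      = univ.filter (fun c => G.dist b c < G.dist a c) :=
    Finset.filter_congr (fun c _ => by
      rcases mg_step2 hG hab c with h | h <;> constructor <;> intro h' <;> omega)
  rw [hflt]; ring

lemma Wsum [Fintype V] (w : V → ℝ) (hG : IsMedianGraph G) {a b : V} (hab : G.Adj a b) :
    (∑ c ∈ univ.filter (fun c => G.dist a c < G.dist b c), w c)
      + ∑ c ∈ univ.filter (fun c => G.dist b c < G.dist a c), w c = ∑ c : V, w c := by
  classical
  have hflt : univ.filter (fun c => ¬ (G.dist a c < G.dist b c))
      = univ.filter (fun c => G.dist b c < G.dist a c) :=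
    Finset.filter_congr (fun c _ => by
      rcases mg_step2 hG hab c with h | h <;> constructor <;> intro h' <;> omega)
  rw [← hflt, Finset.sum_filter_add_sum_filter_not]

lemma walk_chain (hconn : G.Connected) (x z : V) :
    ∃ p : ℕ → V, IsChain G p (G.dist x z) ∧ p 0 = x ∧ p (G.dist x z) = z := by
  obtain ⟨Wk, hWk⟩ := hconn.exists_walk_length_eq_dist x z
  have h0 : Wk.getVert 0 = x := Wk.getVert_zero
  have hn : Wk.getVert (G.dist x z) = z := by rw [← hWk]; exact Wk.getVert_length
  exact ⟨fun i => Wk.getVert i,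
    ⟨fun i hi => Wk.adj_getVert_succ (by omega),
     by show G.dist (Wk.getVert 0) (Wk.getVert (G.dist x z)) = G.dist x z; rw [h0, hn]⟩, h0, hn⟩


end MajorityRule

open MajorityRule

/-- Majority rule: the median set of a median graph is the intersection of all
majoritary halfspaces (halfspaces of weight strictly more than half the total). -/
theorem majority_rule {V : Type*} [Fintype V] (G : SimpleGraph V)
    (hG : IsMedianGraph G) (w : V → ℝ) (hw : ∀ v, 0 ≤ w v) :
    {x : V | ∀ y : V, (∑ v : V, w v * (G.dist x v : ℝ)) ≤ ∑ v : V, w v * (G.dist y v : ℝ)} =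
      ⋂₀ {H : Set V | ∃ u v : V, G.Adj u v ∧ H = Wset G u v ∧
        (∑ z ∈ univ.filter (fun z => G.dist u z < G.dist v z), w z) > (∑ z : V, w z) / 2} := by
  classical
  have hconn := hG.1
  ext x
  simp only [Set.mem_setOf_eq, Set.mem_sInter]
  constructor
  · intro hx H hH
    obtain ⟨u, v, huv, rfl, hmaj⟩ := hH
    show G.dist u x < G.dist v x
    rw [good_iff hG huv x]
    by_contra hxx
    have hbadx : G.dist v x + 1 = G.dist u x := by
      rcases gb hG huv x with h | h
      · exact h
      · exact absurd h hxx
    obtain ⟨g, hggood, hgate⟩ := gate hG huv x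
    have hxg : x ≠ g := by intro h; rw [h] at hbadx; omega
    obtain ⟨p, hch, hp0, hpn⟩ := walk_chain hconn x g
    set k := G.dist x g with hkdef
    have hk : 0 < k := hconn.pos_dist_of_ne hxg
    have hdist : ∀ i ≤ k, ∀ s, G.dist u s + 1 = G.dist v s →
        G.dist (p i) s = (k - i) + G.dist g s := by
      intro i hi s hs
      have h1 : G.dist (p i) (p k) = k - i := chain_dist hconn hch hi le_rfl
      have h2 : G.dist (p 0) (p i) = i := by
        have := chain_dist hconn hch (Nat.zero_le i) hi
        simpa using this
      rw [hpn] at h1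
      rw [hp0] at h2
      have t1 := hconn.dist_triangle (u := p i) (v := g) (w := s)
      have t2 := hconn.dist_triangle (u := x) (v := p i) (w := s)
      have hgs := hgate s hs
      omega
    have hSg : (∑ c ∈ univ.filter (fun c => G.dist u c + 1 = G.dist v c), w c)
        > (∑ c : V, w c) / 2 := by
      have hfl : univ.filter (fun z => G.dist u z < G.dist v z)
          = univ.filter (fun c => G.dist u c + 1 = G.dist v c) :=
        Finset.filter_congr (fun c _ => good_iff hG huv c)
      rw [← hfl]; exact hmaj
    have hstep : ∀ i < k, 0 < (∑ c : V, w c * (G.dist (p i) c : ℝ))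
        - (∑ c : V, w c * (G.dist (p (i + 1)) c : ℝ)) := by
      intro i hik
      have hadj := hch.1 i hik
      rw [Fdiff w hG hadj]
      have hsub : univ.filter (fun c => G.dist u c + 1 = G.dist v c)
          ⊆ univ.filter (fun c => G.dist (p (i + 1)) c < G.dist (p i) c) := by
        intro s hsmem
        simp only [Finset.mem_filter, Finset.mem_univ, true_and] at hsmem ⊢
        have d1 := hdist i (by omega) s hsmem
        have d2 := hdist (i + 1) (by omega) s hsmem
        omega
      have hB : (∑ c ∈ univ.filter (fun c => G.dist u c + 1 = G.dist v c), w c)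
          ≤ ∑ c ∈ univ.filter (fun c => G.dist (p (i + 1)) c < G.dist (p i) c), w c :=
        Finset.sum_le_sum_of_subset_of_nonneg hsub (fun c _ _ => hw c)
      have hpart := Wsum w hG hadj
      linarith
    have htel := Finset.sum_range_sub' (fun i => ∑ c : V, w c * (G.dist (p i) c : ℝ)) k
    rw [hp0, hpn] at htel
    have hpos : 0 < (∑ c : V, w c * (G.dist x c : ℝ)) - ∑ c : V, w c * (G.dist g c : ℝ) := by
      rw [← htel]
      exact Finset.sum_pos (fun i hi => hstep i (Finset.mem_range.mp hi))
        (Finset.nonempty_range_iff.mpr (by omega))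
    have := hx g
    linarith
  · intro hx y
    obtain ⟨p, hch, hp0, hpn⟩ := walk_chain hconn y x
    set n := G.dist y x with hndef
    have hstep : ∀ i < n, 0 ≤ (∑ c : V, w c * (G.dist (p i) c : ℝ))
        - (∑ c : V, w c * (G.dist (p (i + 1)) c : ℝ)) := by
      intro i hik
      have hadj := hch.1 i hik
      rw [Fdiff w hG hadj]
      by_contra hneg
      push_neg at hneg
      have hpart := Wsum w hG hadj
      have hmajA : (∑ z ∈ univ.filter (fun z => G.dist (p i) z < G.dist (p (i + 1)) z), w z)
          > (∑ z : V, w z) / 2 := by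
        linarith
      have hxmem : x ∈ Wset G (p i) (p (i + 1)) :=
        hx (Wset G (p i) (p (i + 1))) ⟨p i, p (i + 1), hadj, rfl, hmajA⟩
      have hxlt : G.dist (p i) x < G.dist (p (i + 1)) x := hxmem
      have d1 : G.dist (p i) (p n) = n - i := chain_dist hconn hch (by omega) le_rfl
      have d2 : G.dist (p (i + 1)) (p n) = n - (i + 1) := chain_dist hconn hch (by omega) le_rfl
      rw [hpn] at d1 d2
      omega
    have htel := Finset.sum_range_sub' (fun i => ∑ c : V, w c * (G.dist (p i) c : ℝ)) n
    rw [hp0, hpn] at htel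
    have hge : 0 ≤ (∑ c : V, w c * (G.dist y c : ℝ)) - ∑ c : V, w c * (G.dist x c : ℝ) := by
      rw [← htel]
      exact Finset.sum_nonneg (fun i hi => hstep i (Finset.mem_range.mp hi))
    linarith
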